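/- Let G be an invertible n×n symmetric matrix over ℚ, v ∈ ℚⁿ, n' ∈ ℤ \ {0}, and ε = ±1. Form the (n+2)×(n+2) symmetric matrix H = [[0, 1, ε v],[1, −2n', 0],[ε vᵀ, 0, G]]. Then H is congruent over ℚ to diag(1/(2n') − λ, −2n', G) where λ = v G⁻¹ vᵀ, provided 1/(2n') − λ ≠ 0; and H is invertible if and only if 2n'λ ≠ 1. In that case sign(H) = sign(G) + sign(1/(2n') − λ) − sign(2n'). -/

import Mathlib

open Matrix

section InertiaHelpers
set_option linter.unusedSectionVars false

variable {m : Type*} [Fintype m] [DecidableEq m]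

/-- Extension by zero of functions on a subtype. -/
def extZero (p : m → Prop) [DecidablePred p] : ({i // p i} → ℝ) →ₗ[ℝ] (m → ℝ) where
  toFun y i := if h : p i then y ⟨i, h⟩ else 0
  map_add' x y := by ext i; by_cases h : p i <;> simp [h]
  map_smul' c x := by ext i; by_cases h : p i <;> simp [h]

lemma extZero_injective (p : m → Prop) [DecidablePred p] :
    Function.Injective (extZero (m := m) p) := by
  intro x y h
  ext ⟨i, hi⟩
  have := congrFun h i
  simpa [extZero, hi] using this

lemma mem_range_extZero (p : m → Prop) [DecidablePred p] (x : m → ℝ) :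
    x ∈ LinearMap.range (extZero (m := m) p) ↔ ∀ i, ¬ p i → x i = 0 := by
  constructor
  · rintro ⟨y, rfl⟩ i hi
    simp [extZero, hi]
  · intro h
    refine ⟨fun j => x j.1, ?_⟩
    ext i
    by_cases hi : p i <;> simp [extZero, hi, h i]

lemma finrank_range_extZero (p : m → Prop) [DecidablePred p] :
    Module.finrank ℝ (LinearMap.range (extZero (m := m) p)) =
      (Finset.univ.filter p).card := by
  rw [LinearMap.finrank_range_of_inj (extZero_injective p), Module.finrank_fintype_fun_eq_card,
    Fintype.card_subtype]

lemma quad_eval (d : m → ℝ) (P : Matrix m m ℝ) (x : m → ℝ) :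
    x ⬝ᵥ ((Pᵀ * diagonal d * P) *ᵥ x) = ∑ i, d i * (P *ᵥ x) i ^ 2 := by
  rw [← Matrix.mulVec_mulVec, ← Matrix.mulVec_mulVec, Matrix.dotProduct_mulVec,
    Matrix.vecMul_transpose]
  simp [dotProduct, Matrix.mulVec_diagonal]
  exact Finset.sum_congr rfl fun i _ => by ring

lemma inertia_pos_le (d1 d2 : m → ℝ) (P Q : Matrix m m ℝ) (hP : IsUnit P.det)
    (hQ : IsUnit Q.det) (h : Pᵀ * diagonal d1 * P = Qᵀ * diagonal d2 * Q) :
    (Finset.univ.filter fun i => 0 < d2 i).card ≤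
      (Finset.univ.filter fun i => 0 < d1 i).card := by
  by_contra hlt
  push_neg at hlt
  have iP : Invertible P := P.invertibleOfIsUnitDet hP
  have iQ : Invertible Q := Q.invertibleOfIsUnitDet hQ
  set V1 : Submodule ℝ (m → ℝ) :=
    Submodule.comap (P.toLinearEquiv' iP).toLinearMap
      (LinearMap.range (extZero (fun i => ¬ 0 < d1 i))) with hV1
  set V2 : Submodule ℝ (m → ℝ) :=
    Submodule.comap (Q.toLinearEquiv' iQ).toLinearMap
      (LinearMap.range (extZero (fun i => 0 < d2 i))) with hV2
  have hd1 : Module.finrank ℝ V1 = (Finset.univ.filter fun i => ¬ 0 < d1 i).card := by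
    rw [hV1, Submodule.comap_equiv_eq_map_symm, LinearEquiv.finrank_map_eq,
      finrank_range_extZero]
  have hd2 : Module.finrank ℝ V2 = (Finset.univ.filter fun i => 0 < d2 i).card := by
    rw [hV2, Submodule.comap_equiv_eq_map_symm, LinearEquiv.finrank_map_eq,
      finrank_range_extZero]
  have hsum := Submodule.finrank_sup_add_finrank_inf_eq V1 V2
  have hsup : Module.finrank ℝ ↥(V1 ⊔ V2) ≤ Fintype.card m := by
    simpa [Module.finrank_fintype_fun_eq_card] using (V1 ⊔ V2).finrank_le
  have hcompl : (Finset.univ.filter fun i => ¬ 0 < d1 i).card =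
      Fintype.card m - (Finset.univ.filter fun i => 0 < d1 i).card := by
    have := Finset.card_filter_add_card_filter_not
      (s := (Finset.univ : Finset m)) (p := fun i => 0 < d1 i)
    simp only [Finset.card_univ] at this
    omega
  have hcard1 : (Finset.univ.filter fun i => 0 < d1 i).card ≤ Fintype.card m := by
    simpa using Finset.card_filter_le Finset.univ (fun i => 0 < d1 i)
  have hpos : 0 < Module.finrank ℝ ↥(V1 ⊓ V2) := by omega
  obtain ⟨⟨x, hx⟩, hx0⟩ := Module.finrank_pos_iff_exists_ne_zero.mp hpos
  have hxne : x ≠ 0 := by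
    simpa [Submodule.mk_eq_zero] using hx0
  obtain ⟨hx1, hx2⟩ := hx
  have hx1' : ∀ i, 0 < d1 i → (P *ᵥ x) i = 0 := by
    intro i hi
    have := (mem_range_extZero _ _).mp hx1
    simpa using this i (by simpa using hi)
  have hx2' : ∀ i, ¬ 0 < d2 i → (Q *ᵥ x) i = 0 := by
    intro i hi
    exact (mem_range_extZero _ _).mp hx2 i (by simpa using hi)
  have hnonpos : x ⬝ᵥ ((Pᵀ * diagonal d1 * P) *ᵥ x) ≤ 0 := by
    rw [quad_eval]
    refine Finset.sum_nonpos fun i _ => ?_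
    by_cases hi : 0 < d1 i
    · simp [hx1' i hi]
    · exact mul_nonpos_of_nonpos_of_nonneg (le_of_not_gt hi) (sq_nonneg _)
  have hQx : Q *ᵥ x ≠ 0 := by
    intro hc
    apply hxne
    apply (Q.toLinearEquiv' iQ).map_eq_zero_iff.mp
    show Matrix.toLin' Q x = 0
    rw [Matrix.toLin'_apply, hc]
  obtain ⟨j, hj⟩ := Function.ne_iff.mp hQx
  have hdj : 0 < d2 j := by
    by_contra hcon
    exact hj (hx2' j hcon)
  have hposq : 0 < x ⬝ᵥ ((Qᵀ * diagonal d2 * Q) *ᵥ x) := by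
    rw [quad_eval]
    refine Finset.sum_pos' (fun i _ => ?_) ⟨j, Finset.mem_univ j, ?_⟩
    · by_cases hi : 0 < d2 i
      · exact mul_nonneg hi.le (sq_nonneg _)
      · simp [hx2' i hi]
    · exact mul_pos hdj (pow_two_pos_of_ne_zero (by simpa using hj))
  rw [h] at hnonpos
  exact absurd hposq (not_lt.mpr hnonpos)

lemma spectral_congr (A : Matrix m m ℝ) (hA : A.IsHermitian) :
    ∃ P : Matrix m m ℝ, IsUnit P.det ∧ A = Pᵀ * diagonal hA.eigenvalues * P := by
  have hstar : star (hA.eigenvectorUnitary : Matrix m m ℝ) =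
      (hA.eigenvectorUnitary : Matrix m m ℝ)ᵀ := by
    ext i j; simp [Matrix.star_eq_conjTranspose, Matrix.conjTranspose_apply]
  refine ⟨(hA.eigenvectorUnitary : Matrix m m ℝ)ᵀ, ?_, ?_⟩
  · have h1 : (hA.eigenvectorUnitary : Matrix m m ℝ) *
        star (hA.eigenvectorUnitary : Matrix m m ℝ) = 1 :=
      Matrix.mem_unitaryGroup_iff.mp hA.eigenvectorUnitary.2
    have h2 := congrArg Matrix.det h1
    rw [Matrix.det_mul, hstar, Matrix.det_one] at h2
    exact IsUnit.of_mul_eq_one _ (by rw [mul_comm] at h2; exact h2)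
  · have h := hA.spectral_theorem
    rw [Unitary.conjStarAlgAut_apply, hstar] at h
    rw [Matrix.transpose_transpose]
    simpa using h

lemma inertia_pos_eq (d1 d2 : m → ℝ) (P Q : Matrix m m ℝ) (hP : IsUnit P.det)
    (hQ : IsUnit Q.det) (h : Pᵀ * diagonal d1 * P = Qᵀ * diagonal d2 * Q) :
    (Finset.univ.filter fun i => 0 < d2 i).card =
      (Finset.univ.filter fun i => 0 < d1 i).card :=
  le_antisymm (inertia_pos_le d1 d2 P Q hP hQ h) (inertia_pos_le d2 d1 Q P hQ hP h.symm)

lemma inertia_neg_eq (d1 d2 : m → ℝ) (P Q : Matrix m m ℝ) (hP : IsUnit P.det)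
    (hQ : IsUnit Q.det) (h : Pᵀ * diagonal d1 * P = Qᵀ * diagonal d2 * Q) :
    (Finset.univ.filter fun i => d2 i < 0).card =
      (Finset.univ.filter fun i => d1 i < 0).card := by
  have h' : Pᵀ * diagonal (-d1) * P = Qᵀ * diagonal (-d2) * Q := by
    have : ∀ (R : Matrix m m ℝ) (d : m → ℝ),
        Rᵀ * diagonal (-d) * R = -(Rᵀ * diagonal d * R) := by
      intro R d
      have hd : diagonal (-d) = -diagonal d := by
        ext i j; by_cases hij : i = j <;> simp [Matrix.diagonal_apply, hij]
      rw [hd, Matrix.mul_neg, Matrix.neg_mul]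
    rw [this, this, h]
  have := inertia_pos_eq (-d1) (-d2) P Q hP hQ h'
  simpa [neg_pos] using this

/-- Signature-type counts of a Hermitian real matrix equal those of any
diagonal matrix congruent to it. -/
lemma counts_eq_of_congr (A : Matrix m m ℝ) (hA : A.IsHermitian) (d : m → ℝ)
    (R : Matrix m m ℝ) (hR : IsUnit R.det) (h : A = Rᵀ * diagonal d * R) :
    (Finset.univ.filter fun i => 0 < hA.eigenvalues i).card =
        (Finset.univ.filter fun i => 0 < d i).card ∧
      (Finset.univ.filter fun i => hA.eigenvalues i < 0).card =
        (Finset.univ.filter fun i => d i < 0).card := by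
  obtain ⟨P, hP, hPe⟩ := spectral_congr A hA
  have key : Pᵀ * diagonal hA.eigenvalues * P = Rᵀ * diagonal d * R := by
    rw [← hPe, ← h]
  exact ⟨(inertia_pos_eq _ _ P R hP hR key).symm ▸
      (inertia_pos_eq d hA.eigenvalues R P hR hP key.symm),
    inertia_neg_eq d hA.eigenvalues R P hR hP key.symm⟩

lemma card_filter_sum_type {α β : Type*} [Fintype α] [Fintype β]
    (p : α ⊕ β → Prop) [DecidablePred p] :
    (Finset.univ.filter p).card =
      (Finset.univ.filter fun a => p (Sum.inl a)).card +
        (Finset.univ.filter fun b => p (Sum.inr b)).card := by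
  simp only [Finset.card_filter]
  rw [Fintype.sum_sum_type]

end InertiaHelpers

/-- Signature of a rational symmetric matrix, via the eigenvalues of its real
companion. -/
noncomputable def ratSig {m : Type*} [Fintype m] [DecidableEq m]
    (A : Matrix m m ℚ) (hA : (A.map ((↑) : ℚ → ℝ)).IsHermitian) : ℤ :=
  ((Finset.univ.filter fun i => 0 < hA.eigenvalues i).card : ℤ) -
    ((Finset.univ.filter fun i => hA.eigenvalues i < 0).card : ℤ)

/-- The symmetric (Goeritz) congruence computation of Theorem 5.4. -/
theorem stmt10 (n : ℕ) (G : Matrix (Fin n) (Fin n) ℚ)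
    (hGsymm : Gᵀ = G) (hGinv : IsUnit G.det)
    (v : Fin n → ℚ) (n' : ℤ) (hn' : n' ≠ 0) (ε : ℚ) (hε : ε = 1 ∨ ε = -1)
    (lam : ℚ) (hlam : lam = v ⬝ᵥ (G⁻¹ *ᵥ v))
    (B : Matrix (Fin 2) (Fin n) ℚ)
    (hB : B = Matrix.of fun i j => if i = 0 then ε * v j else 0)
    (H : Matrix (Fin 2 ⊕ Fin n) (Fin 2 ⊕ Fin n) ℚ)
    (hH : H = Matrix.fromBlocks !![0, 1; 1, -2 * (n' : ℚ)] B Bᵀ G) :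
    (1 / (2 * (n' : ℚ)) - lam ≠ 0 →
      ∃ P : Matrix (Fin 2 ⊕ Fin n) (Fin 2 ⊕ Fin n) ℚ, IsUnit P.det ∧
        Pᵀ * H * P = Matrix.fromBlocks
          !![1 / (2 * (n' : ℚ)) - lam, 0; 0, -2 * (n' : ℚ)] 0 0 G) ∧
    (IsUnit H.det ↔ 2 * (n' : ℚ) * lam ≠ 1) ∧
    (2 * (n' : ℚ) * lam ≠ 1 →
      ∀ (hHh : (H.map ((↑) : ℚ → ℝ)).IsHermitian)
        (hGh : (G.map ((↑) : ℚ → ℝ)).IsHermitian),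
        (ratSig H hHh : ℝ) = (ratSig G hGh : ℝ) +
          Real.sign ((1 / (2 * (n' : ℚ)) - lam : ℚ) : ℝ) -
          Real.sign (2 * (n' : ℝ))) := by
  have hc : (n' : ℚ) ≠ 0 := Int.cast_ne_zero.mpr hn'
  have hε2 : ε * ε = 1 := by rcases hε with h | h <;> rw [h] <;> norm_num
  haveI : Invertible G := G.invertibleOfIsUnitDet hGinv
  have hGG : G * G⁻¹ = 1 := Matrix.mul_nonsing_inv _ hGinv
  have hGG' : G⁻¹ * G = 1 := Matrix.nonsing_inv_mul _ hGinv
  have hGit : (G⁻¹)ᵀ = G⁻¹ := by rw [Matrix.transpose_nonsing_inv, hGsymm]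
  have hBGB : B * G⁻¹ * Bᵀ = !![lam, 0; 0, 0] := by
    ext i j
    fin_cases i <;> fin_cases j
    · show (B * G⁻¹ * Bᵀ) 0 0 = lam
      rw [hlam]
      simp only [Matrix.mul_apply, Matrix.transpose_apply, hB, Matrix.of_apply,
        dotProduct, Matrix.mulVec, if_pos rfl]
      simp only [ite_true, Finset.sum_mul, Finset.mul_sum]
      rw [Finset.sum_comm]
      refine Finset.sum_congr rfl fun k _ => ?_
      refine Finset.sum_congr rfl fun l _ => ?_
      linear_combination (v k * G⁻¹ k l * v l) * hε2
    all_goals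
      simp [hB, Matrix.mul_apply]
  -- block congruence step 1
  set X : Matrix (Fin n) (Fin 2) ℚ := -(G⁻¹ * Bᵀ) with hX
  have hXT : Xᵀ = -(B * G⁻¹) := by
    rw [hX, Matrix.transpose_neg, Matrix.transpose_mul, Matrix.transpose_transpose, hGit]
  have hGX : G * X = -Bᵀ := by
    rw [hX, Matrix.mul_neg, ← Matrix.mul_assoc, hGG, Matrix.one_mul]
  have hXTG : Xᵀ * G = -B := by
    rw [hXT, Matrix.neg_mul, Matrix.mul_assoc, hGG', Matrix.mul_one]
  set P1 : Matrix (Fin 2 ⊕ Fin n) (Fin 2 ⊕ Fin n) ℚ := Matrix.fromBlocks 1 0 X 1 with hP1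
  have h1 : P1ᵀ * H * P1 = Matrix.fromBlocks !![-lam, 1; 1, -2 * (n' : ℚ)] 0 0 G := by
    rw [hP1, hH, Matrix.fromBlocks_transpose, Matrix.fromBlocks_multiply,
      Matrix.fromBlocks_multiply]
    simp only [Matrix.transpose_one, Matrix.transpose_zero, Matrix.one_mul, Matrix.mul_one,
      Matrix.zero_mul, Matrix.mul_zero, add_zero, zero_add]
    rw [hXTG, hGX]
    simp only [add_neg_cancel, neg_add_cancel, Matrix.zero_mul, add_zero]
    have hTL : !![(0:ℚ), 1; 1, -2 * (n' : ℚ)] + Xᵀ * Bᵀ = !![-lam, 1; 1, -2 * (n' : ℚ)] := by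
      rw [hXT, Matrix.neg_mul, hBGB]
      ext i j
      fin_cases i <;> fin_cases j <;> simp
    rw [hTL]
  set Q2 : Matrix (Fin 2) (Fin 2) ℚ := !![1, 0; 1/(2*(n':ℚ)), 1] with hQ2
  have h2 : Q2ᵀ * !![-lam, 1; 1, -2 * (n' : ℚ)] * Q2 =
      !![1 / (2 * (n' : ℚ)) - lam, 0; 0, -2 * (n' : ℚ)] := by
    rw [hQ2]
    ext i j
    fin_cases i <;> fin_cases j <;>
        simp [Matrix.mul_apply, Fin.sum_univ_two, Matrix.transpose_apply, Matrix.vecHead,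
          Matrix.vecTail] <;>
      field_simp <;> ring
  set P2 : Matrix (Fin 2 ⊕ Fin n) (Fin 2 ⊕ Fin n) ℚ := Matrix.fromBlocks Q2 0 0 1 with hP2
  set P : Matrix (Fin 2 ⊕ Fin n) (Fin 2 ⊕ Fin n) ℚ := P1 * P2 with hP
  have hdetP : IsUnit P.det := by
    rw [hP, Matrix.det_mul, hP1, hP2, Matrix.det_fromBlocks_zero₁₂,
      Matrix.det_fromBlocks_zero₂₁, hQ2]
    simp [Matrix.det_fin_two_of]
  have hcong : Pᵀ * H * P = Matrix.fromBlocks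
      !![1 / (2 * (n' : ℚ)) - lam, 0; 0, -2 * (n' : ℚ)] 0 0 G := by
    rw [hP, Matrix.transpose_mul]
    have : P2ᵀ * P1ᵀ * H * (P1 * P2) = P2ᵀ * (P1ᵀ * H * P1) * P2 := by
      simp only [Matrix.mul_assoc]
    rw [this, h1, hP2, Matrix.fromBlocks_transpose, Matrix.fromBlocks_multiply,
      Matrix.fromBlocks_multiply]
    simp only [Matrix.transpose_one, Matrix.transpose_zero, Matrix.one_mul, Matrix.mul_one,
      Matrix.zero_mul, Matrix.mul_zero, add_zero, zero_add]
    rw [h2]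
  have hA2B : !![(0:ℚ), 1; 1, -2 * (n' : ℚ)] - B * G⁻¹ * Bᵀ = !![-lam, 1; 1, -2 * (n' : ℚ)] := by
    rw [hBGB]
    ext i j
    fin_cases i <;> fin_cases j <;> simp
  have hG0 : G.det ≠ 0 := by
    intro h0
    rw [h0] at hGinv
    simpa using hGinv
  have hdetH : H.det = G.det * (2 * (n':ℚ) * lam - 1) := by
    rw [hH, Matrix.det_fromBlocks₂₂, Matrix.invOf_eq_nonsing_inv, hA2B,
      Matrix.det_fin_two_of]
    ring
  have hdet_iff : IsUnit H.det ↔ 2 * (n':ℚ) * lam ≠ 1 := by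
    rw [isUnit_iff_ne_zero, hdetH, mul_ne_zero_iff]
    simp [hG0, sub_ne_zero]
  -- real part
  have hiP : Invertible P := P.invertibleOfIsUnitDet hdetP
  have hdetPT : IsUnit Pᵀ.det := by rwa [Matrix.det_transpose]
  have hHrep : H = (P⁻¹)ᵀ * (Matrix.fromBlocks
      !![1 / (2 * (n' : ℚ)) - lam, 0; 0, -2 * (n' : ℚ)] 0 0 G) * P⁻¹ := by
    rw [← hcong, Matrix.transpose_nonsing_inv]
    rw [Matrix.mul_assoc (Pᵀ)⁻¹ (Pᵀ * H * P) P⁻¹, Matrix.mul_assoc (Pᵀ * H) P P⁻¹,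
      Matrix.mul_nonsing_inv _ hdetP, Matrix.mul_one, ← Matrix.mul_assoc,
      Matrix.nonsing_inv_mul _ hdetPT, Matrix.one_mul]
  refine ⟨fun _ => ⟨P, hdetP, hcong⟩, hdet_iff, ?_⟩
  intro hne hHh hGh
  have ha : 1 / (2 * (n' : ℚ)) - lam ≠ 0 := by
    intro h0
    apply hne
    field_simp at h0
    linarith
  have hSdet : IsUnit ((P⁻¹).map ((↑) : ℚ → ℝ)).det := by
    have h4 : (P⁻¹).det ≠ 0 := isUnit_iff_ne_zero.mp (P.isUnit_nonsing_inv_det hdetP)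
    have h5 : ((P⁻¹).map ((↑) : ℚ → ℝ)).det = (((P⁻¹).det : ℚ) : ℝ) := by
      rw [show ((↑) : ℚ → ℝ) = ⇑(Rat.castHom ℝ) from rfl, ← RingHom.mapMatrix_apply,
        ← RingHom.map_det]
    rw [isUnit_iff_ne_zero, h5]
    exact Rat.cast_ne_zero.mpr h4
  have hHRrep : H.map ((↑) : ℚ → ℝ) = ((P⁻¹).map ((↑) : ℚ → ℝ))ᵀ *
      ((Matrix.fromBlocks !![1 / (2 * (n' : ℚ)) - lam, 0; 0, -2 * (n' : ℚ)] 0 0 G).map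
        ((↑) : ℚ → ℝ)) * ((P⁻¹).map ((↑) : ℚ → ℝ)) := by
    rw [show ((↑) : ℚ → ℝ) = ⇑(Rat.castHom ℝ) from rfl, ← Matrix.transpose_map,
      ← Matrix.map_mul, ← Matrix.map_mul, ← hHrep]
  have h22map : (!![1 / (2 * (n' : ℚ)) - lam, 0; 0, -2 * (n' : ℚ)]).map ((↑) : ℚ → ℝ) =
      !![((1 / (2 * (n' : ℚ)) - lam : ℚ) : ℝ), 0; 0, -2 * (n' : ℝ)] := by
    ext i j
    fin_cases i <;> fin_cases j <;> simp [Matrix.map_apply] <;> push_cast <;> ring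
  have hzmap : ∀ {α β : Type} [Fintype α] [Fintype β],
      (0 : Matrix α β ℚ).map ((↑) : ℚ → ℝ) = 0 := by
    intro α β _ _
    ext i j
    simp [Matrix.map_apply]
  have hD0map : (Matrix.fromBlocks !![1 / (2 * (n' : ℚ)) - lam, 0; 0, -2 * (n' : ℚ)]
        0 0 G).map ((↑) : ℚ → ℝ) =
      Matrix.fromBlocks !![((1 / (2 * (n' : ℚ)) - lam : ℚ) : ℝ), 0; 0, -2 * (n' : ℝ)]
        0 0 (G.map ((↑) : ℚ → ℝ)) := by
    rw [Matrix.fromBlocks_map, h22map, hzmap, hzmap]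
  obtain ⟨W, hWdet, hWrep⟩ := spectral_congr (G.map ((↑) : ℚ → ℝ)) hGh
  set a' : ℝ := ((1 / (2 * (n' : ℚ)) - lam : ℚ) : ℝ) with ha'
  set d : Fin 2 ⊕ Fin n → ℝ := Sum.elim ![a', -2 * (n' : ℝ)] hGh.eigenvalues with hd
  set T : Matrix (Fin 2 ⊕ Fin n) (Fin 2 ⊕ Fin n) ℝ :=
    Matrix.fromBlocks 1 0 0 W with hT
  have hdiag : !![a', 0; 0, -2 * (n' : ℝ)] = diagonal ![a', -2 * (n' : ℝ)] := by
    ext i j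
    fin_cases i <;> fin_cases j <;> simp [Matrix.diagonal]
  have hTdet : IsUnit T.det := by
    rw [hT, Matrix.det_fromBlocks_zero₂₁]
    simpa using hWdet
  have hTrep : Matrix.fromBlocks !![a', 0; 0, -2 * (n' : ℝ)] 0 0 (G.map ((↑) : ℚ → ℝ)) =
      Tᵀ * diagonal d * T := by
    rw [hdiag, hWrep, hT, hd, ← Matrix.fromBlocks_diagonal, Matrix.fromBlocks_transpose,
      Matrix.fromBlocks_multiply, Matrix.fromBlocks_multiply]
    simp only [Matrix.transpose_one, Matrix.transpose_zero, Matrix.one_mul, Matrix.mul_one,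
      Matrix.zero_mul, Matrix.mul_zero, add_zero, zero_add]
  set R : Matrix (Fin 2 ⊕ Fin n) (Fin 2 ⊕ Fin n) ℝ := T * (P⁻¹).map ((↑) : ℚ → ℝ) with hR
  have hRdet : IsUnit R.det := by
    rw [hR, Matrix.det_mul]
    exact hTdet.mul hSdet
  have hfinal : H.map ((↑) : ℚ → ℝ) = Rᵀ * diagonal d * R := by
    have step : Rᵀ * diagonal d * R = ((P⁻¹).map ((↑) : ℚ → ℝ))ᵀ *
        (Tᵀ * diagonal d * T) * ((P⁻¹).map ((↑) : ℚ → ℝ)) := by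
      rw [hR, Matrix.transpose_mul]
      simp only [Matrix.mul_assoc]
    rw [step, ← hTrep, ← hD0map]
    exact hHRrep
  obtain ⟨hposc, hnegc⟩ := counts_eq_of_congr (H.map ((↑) : ℚ → ℝ)) hHh d R hRdet hfinal
  have hfin2p : (Finset.univ.filter fun a : Fin 2 => 0 < ![a', -2 * (n' : ℝ)] a).card =
      (if 0 < a' then 1 else 0) + (if 0 < -2 * (n' : ℝ) then 1 else 0) := by
    rw [Finset.card_filter, Fin.sum_univ_two]
    simp
  have hfin2n : (Finset.univ.filter fun a : Fin 2 => ![a', -2 * (n' : ℝ)] a < 0).card =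
      (if a' < 0 then 1 else 0) + (if -2 * (n' : ℝ) < 0 then 1 else 0) := by
    rw [Finset.card_filter, Fin.sum_univ_two]
    simp
  have e1 : ratSig H hHh = ((if 0 < a' then (1 : ℤ) else 0) - (if a' < 0 then 1 else 0)) +
      ((if 0 < -2 * (n' : ℝ) then (1 : ℤ) else 0) - (if -2 * (n' : ℝ) < 0 then 1 else 0)) +
      ratSig G hGh := by
    unfold ratSig
    rw [hposc, hnegc, card_filter_sum_type, card_filter_sum_type]
    simp only [hd, Sum.elim_inl, Sum.elim_inr]
    rw [hfin2p, hfin2n]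
    push_cast
    by_cases c1 : 0 < a' <;> by_cases c2 : a' < 0 <;>
      by_cases c3 : 0 < -2 * (n' : ℝ) <;> by_cases c4 : -2 * (n' : ℝ) < 0 <;>
      simp [c1, c2, c3, c4] <;> ring
  have haR : a' ≠ 0 := Rat.cast_ne_zero.mpr ha
  have hbR : (n' : ℝ) ≠ 0 := Int.cast_ne_zero.mpr hn'
  rcases haR.lt_or_gt with h1 | h1 <;> rcases hbR.lt_or_gt with h2 | h2
  · have c2 : (0 : ℝ) < -2 * (n' : ℝ) := by linarith
    rw [e1, if_neg (not_lt.mpr h1.le), if_pos h1, if_pos c2, if_neg (not_lt.mpr c2.le),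
      Real.sign_of_neg h1, Real.sign_of_neg (show 2 * (n' : ℝ) < 0 by linarith)]
    push_cast
    ring
  · have c2 : -2 * (n' : ℝ) < 0 := by linarith
    rw [e1, if_neg (not_lt.mpr h1.le), if_pos h1, if_neg (not_lt.mpr c2.le), if_pos c2,
      Real.sign_of_neg h1, Real.sign_of_pos (show 0 < 2 * (n' : ℝ) by linarith)]
    push_cast
    ring
  · have c2 : (0 : ℝ) < -2 * (n' : ℝ) := by linarith
    rw [e1, if_pos h1, if_neg (not_lt.mpr h1.le), if_pos c2, if_neg (not_lt.mpr c2.le),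
      Real.sign_of_pos h1, Real.sign_of_neg (show 2 * (n' : ℝ) < 0 by linarith)]
    push_cast
    ring
  · have c2 : -2 * (n' : ℝ) < 0 := by linarith
    rw [e1, if_pos h1, if_neg (not_lt.mpr h1.le), if_neg (not_lt.mpr c2.le), if_pos c2,
      Real.sign_of_pos h1, Real.sign_of_pos (show 0 < 2 * (n' : ℝ) by linarith)]
    push_cast
    ring
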